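/- Let X be a real p×n matrix and Y a real q×n matrix such that XX^T and YY^T are invertible, and let λ > 0 with λ ≠ 1. Then λ is an eigenvalue of the sample canonical correlation matrix C_XY := (XX^T)^{-1/2} (XY^T) (YY^T)^{-1} (YX^T) (XX^T)^{-1/2} if and only if det H(λ) = 0, where H(λ) is the (p+q+2n)×(p+q+2n) symmetric block matrix H(λ) = [[0, W],[W^T, D(λ)^{-1}]], with W = diag(X, Y) (the (p+q)×2n block-diagonal matrix with blocks X and Y) and D(λ) the 2n×2n matrix [[λ I_n, λ^{1/2} I_n],[λ^{1/2} I_n, λ I_n]]. -/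

import Mathlib

open Matrix

namespace Matrix.PosSemidef

open scoped ComplexOrder

/-- The positive semidefinite square root of a positive semidefinite matrix
(the definition removed from Mathlib, restored with its old meaning). -/
noncomputable def sqrt {n 𝕜 : Type*} [Fintype n] [DecidableEq n] [RCLike 𝕜]
    {A : Matrix n n 𝕜} (hA : A.PosSemidef) : Matrix n n 𝕜 :=
  (hA.isHermitian.eigenvectorUnitary : Matrix n n 𝕜) *
    diagonal ((RCLike.ofReal : ℝ → 𝕜) ∘ (Real.sqrt ∘ hA.isHermitian.eigenvalues)) *
    (star hA.isHermitian.eigenvectorUnitary : Matrix n n 𝕜)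

theorem sqrt_mul_self {n 𝕜 : Type*} [Fintype n] [DecidableEq n] [RCLike 𝕜]
    {A : Matrix n n 𝕜} (hA : A.PosSemidef) : hA.sqrt * hA.sqrt = A := by
  have hUU : (star hA.isHermitian.eigenvectorUnitary : Matrix n n 𝕜) *
      (hA.isHermitian.eigenvectorUnitary : Matrix n n 𝕜) = 1 := Unitary.coe_star_mul_self _
  unfold sqrt
  conv_rhs => rw [hA.isHermitian.spectral_theorem, Unitary.conjStarAlgAut_apply]
  simp only [Matrix.mul_assoc]
  rw [← Matrix.mul_assoc (star _ : Matrix n n 𝕜) _ _, hUU, Matrix.one_mul,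
    ← Matrix.mul_assoc (diagonal _) (diagonal _), diagonal_mul_diagonal]
  congr 3
  funext i
  simp only [Function.comp_apply]
  rw [← RCLike.ofReal_mul, Real.mul_self_sqrt (hA.eigenvalues_nonneg i)]

end Matrix.PosSemidef

theorem stmt0 (p q n : ℕ) (hp : 0 < p) (hq : 0 < q) (hn : 0 < n)
    (X : Matrix (Fin p) (Fin n) ℝ) (Y : Matrix (Fin q) (Fin n) ℝ)
    (hX : (X * Xᵀ).PosDef) (hY : IsUnit (Y * Yᵀ).det)
    (lam : ℝ) (hlam : 0 < lam) (hlam1 : lam ≠ 1)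
    (C : Matrix (Fin p) (Fin p) ℝ)
    (hC : C = (hX.posSemidef.sqrt)⁻¹ * (X * Yᵀ) * (Y * Yᵀ)⁻¹ * (Y * Xᵀ) * (hX.posSemidef.sqrt)⁻¹)
    (W : Matrix (Fin p ⊕ Fin q) (Fin n ⊕ Fin n) ℝ)
    (hW : W = fromBlocks X 0 0 Y)
    (D : Matrix (Fin n ⊕ Fin n) (Fin n ⊕ Fin n) ℝ)
    (hD : D = fromBlocks (lam • 1) (Real.sqrt lam • 1) (Real.sqrt lam • 1) (lam • 1))
    (H : Matrix ((Fin p ⊕ Fin q) ⊕ (Fin n ⊕ Fin n)) ((Fin p ⊕ Fin q) ⊕ (Fin n ⊕ Fin n)) ℝ)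
    (hH : H = fromBlocks 0 W Wᵀ D⁻¹) :
    (∃ v : Fin p → ℝ, v ≠ 0 ∧ C.mulVec v = lam • v) ↔ H.det = 0 := by
  classical
  set S := hX.posSemidef.sqrt with hSdef
  have hSS : S * S = X * Xᵀ := hX.posSemidef.sqrt_mul_self
  have hXdet : IsUnit (X * Xᵀ).det := isUnit_iff_ne_zero.2 hX.det_pos.ne'
  have hSdet : IsUnit S.det := by
    have h : IsUnit (S.det * S.det) := by rw [← det_mul, hSS]; exact hXdet
    exact isUnit_of_mul_isUnit_left h
  set s : ℝ := Real.sqrt lam with hs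
  have hss : s * s = lam := Real.mul_self_sqrt hlam.le
  have hlam0 : lam ≠ 0 := hlam.ne'
  have hc0 : lam * lam - lam ≠ 0 := by
    intro h
    have h2 : lam * (lam - 1) = 0 := by nlinarith [h]
    rcases mul_eq_zero.mp h2 with h' | h'
    · exact hlam0 h'
    · exact hlam1 (by linarith)
  -- explicit inverse of D
  have hDD' : D * ((lam * lam - lam)⁻¹ •
      fromBlocks (lam • 1) ((-s) • 1) ((-s) • 1) (lam • 1)) = 1 := by
    rw [hD, Matrix.mul_smul, fromBlocks_multiply]
    simp only [Matrix.smul_mul, Matrix.mul_smul, Matrix.one_mul, smul_smul, ← add_smul]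
    rw [show lam * lam + -s * s = lam * lam - lam from by rw [← hss]; ring,
        show -s * lam + lam * s = 0 from by ring,
        show lam * s + -s * lam = 0 from by ring,
        show -s * s + lam * lam = lam * lam - lam from by rw [← hss]; ring]
    rw [zero_smul, fromBlocks_smul, smul_smul, inv_mul_cancel₀ hc0, one_smul, smul_zero,
      fromBlocks_one]
  have hDdet : IsUnit D.det := isUnit_det_of_right_inverse hDD'
  have hDidet : IsUnit (D⁻¹).det := D.isUnit_nonsing_inv_det hDdet
  haveI : Invertible D⁻¹ := (D⁻¹).invertibleOfIsUnitDet hDidet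
  -- Schur complement for H
  have hHdet : H.det = (D⁻¹).det *
      ((-1 : ℝ) ^ (Fintype.card (Fin p ⊕ Fin q)) * (W * D * Wᵀ).det) := by
    rw [hH, det_fromBlocks₂₂, invOf_eq_nonsing_inv, nonsing_inv_nonsing_inv D hDdet, zero_sub,
      det_neg, Matrix.mul_assoc]
  have step1 : H.det = 0 ↔ (W * D * Wᵀ).det = 0 := by
    rw [hHdet, mul_eq_zero, mul_eq_zero]
    constructor
    · rintro (h | h | h)
      · exact absurd h hDidet.ne_zero
      · exact absurd h (pow_ne_zero _ (by norm_num))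
      · exact h
    · exact fun h => Or.inr (Or.inr h)
  -- compute W * D * Wᵀ
  set M := X * Yᵀ * (Y * Yᵀ)⁻¹ * (Y * Xᵀ) with hM
  have hWDW : W * D * Wᵀ =
      fromBlocks (lam • (X * Xᵀ)) (s • (X * Yᵀ)) (s • (Y * Xᵀ)) (lam • (Y * Yᵀ)) := by
    rw [hW, hD, fromBlocks_transpose, transpose_zero, fromBlocks_multiply, fromBlocks_multiply]
    simp [Matrix.mul_smul, Matrix.smul_mul]
  have hYl : IsUnit (lam • (Y * Yᵀ)).det := by
    rw [det_smul]
    exact ((isUnit_iff_ne_zero.2 hlam0).pow _).mul hY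
  haveI : Invertible (lam • (Y * Yᵀ)) := (lam • (Y * Yᵀ)).invertibleOfIsUnitDet hYl
  haveI : Invertible lam := invertibleOfNonzero hlam0
  have hinner : (s • (X * Yᵀ)) * (lam • (Y * Yᵀ))⁻¹ * (s • (Y * Xᵀ)) = M := by
    rw [Matrix.inv_smul (Y * Yᵀ) lam hY, invOf_eq_inv]
    simp only [Matrix.smul_mul, Matrix.mul_smul, smul_smul]
    rw [show s * (lam⁻¹ * s) = 1 from by
      rw [mul_comm lam⁻¹ s, ← mul_assoc, hss, mul_inv_cancel₀ hlam0], one_smul, hM]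
  have hdet2 : (W * D * Wᵀ).det = (lam • (Y * Yᵀ)).det * (lam • (X * Xᵀ) - M).det := by
    rw [hWDW, det_fromBlocks₂₂, invOf_eq_nonsing_inv, hinner]
  have step2 : (W * D * Wᵀ).det = 0 ↔ (lam • (X * Xᵀ) - M).det = 0 := by
    rw [hdet2, mul_eq_zero]
    constructor
    · rintro (h | h)
      · exact absurd h hYl.ne_zero
      · exact h
    · exact fun h => Or.inr h
  -- factor through S
  have hS1 : S * S⁻¹ = 1 := Matrix.mul_nonsing_inv _ hSdet
  have hS2 : S⁻¹ * S = 1 := Matrix.nonsing_inv_mul _ hSdet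
  have hSCS : S * C * S = M := by
    rw [hC, hM]
    simp only [Matrix.mul_assoc]
    rw [hS2, Matrix.mul_one, ← Matrix.mul_assoc S S⁻¹, hS1, Matrix.one_mul]
  have hfac : lam • (X * Xᵀ) - M = S * ((lam • 1 - C) * S) := by
    rw [Matrix.sub_mul, Matrix.smul_mul, Matrix.one_mul, Matrix.mul_sub, Matrix.mul_smul, hSS,
      ← Matrix.mul_assoc, hSCS]
  have step3 : (lam • (X * Xᵀ) - M).det = 0 ↔ (lam • (1 : Matrix (Fin p) (Fin p) ℝ) - C).det = 0 := by
    rw [hfac, det_mul, det_mul, mul_eq_zero, mul_eq_zero]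
    simp [hSdet.ne_zero]
  -- eigenvalue condition
  have step4 : (∃ v : Fin p → ℝ, v ≠ 0 ∧ C.mulVec v = lam • v) ↔
      (lam • (1 : Matrix (Fin p) (Fin p) ℝ) - C).det = 0 := by
    rw [← Matrix.exists_mulVec_eq_zero_iff]
    apply exists_congr
    intro v
    apply and_congr_right
    intro _
    rw [sub_mulVec, smul_mulVec, one_mulVec, sub_eq_zero, eq_comm]
  rw [step4, step1, step2, step3]
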